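/- Let F be a complete discretely valued field with ring of integers O and finite residue field, and let n ≥ 1. The subgroup of n-th powers O^{×n} has finite index in O^× if and only if the characteristic of F does not divide n. -/

import Mathlib

open Polynomial IsLocalRing


/-- Binomial expansion shape: `(1+b)^n = 1 + n b + b^2 r`. -/
lemma exists_one_add_pow {S : Type*} [CommRing S] (b : S) :
    ∀ n : ℕ, ∃ r : S, (1 + b) ^ n = 1 + n * b + b ^ 2 * r := by
  intro n
  induction n with
  | zero => exact ⟨0, by simp⟩
  | succ n ih =>
    obtain ⟨r, hr⟩ := ih
    refine ⟨r + n + b * r, ?_⟩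
    rw [pow_succ, hr]
    push_cast
    ring

/-- Non-monic version of Hensel's lemma for adically complete rings (the Mathlib proof of
`IsAdicComplete.henselianRing` never uses monicity). -/
theorem hensel_nonmonic {R : Type*} [CommRing R] (I : Ideal R) [IsAdicComplete I R]
    (f : R[X]) (a₀ : R) (h₁ : f.eval a₀ ∈ I)
    (h₂ : IsUnit (Ideal.Quotient.mk I (f.derivative.eval a₀))) :
    ∃ a : R, f.IsRoot a ∧ a - a₀ ∈ I := by
  classical
  let f' := derivative f
  let c : ℕ → R := fun n => Nat.recOn n a₀ fun _ b => b - f.eval b * Ring.inverse (f'.eval b)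
  have hc : ∀ n, c (n + 1) = c n - f.eval (c n) * Ring.inverse (f'.eval (c n)) := by
    intro n
    simp only [c, Nat.rec_add_one]
  have hc_mod : ∀ n, c n ≡ a₀ [SMOD I] := by
    intro n
    induction' n with n ih
    · rfl
    rw [hc, sub_eq_add_neg, ← add_zero a₀]
    refine ih.add ?_
    rw [SModEq.zero, Ideal.neg_mem_iff]
    refine I.mul_mem_right _ ?_
    rw [← SModEq.zero] at h₁ ⊢
    exact (ih.eval f).trans h₁
  have hf'c : ∀ n, IsUnit (f'.eval (c n)) := by
    intro n
    haveI := isLocalHom_of_le_jacobson_bot I (IsAdicComplete.le_jacobson_bot I)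
    apply IsUnit.of_map (Ideal.Quotient.mk I)
    convert h₂ using 1
    exact SModEq.def.mp ((hc_mod n).eval _)
  have hfcI : ∀ n, f.eval (c n) ∈ I ^ (n + 1) := by
    intro n
    induction' n with n ih
    · rw [zero_add, pow_one]; exact h₁
    rw [← taylor_eval_sub (c n), hc, sub_eq_add_neg, sub_eq_add_neg,
      add_neg_cancel_comm]
    rw [eval_eq_sum, sum_over_range' _ _ _ (lt_add_of_pos_right _ zero_lt_two), ←
      Finset.sum_range_add_sum_Ico _ (Nat.le_add_left _ _)]
    swap
    · intro i
      rw [zero_mul]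
    refine Ideal.add_mem _ ?_ ?_
    · erw [Finset.sum_range_succ]
      rw [Finset.range_one, Finset.sum_singleton,
        taylor_coeff_zero, taylor_coeff_one, pow_zero, pow_one, mul_one, mul_neg,
        mul_left_comm, Ring.mul_inverse_cancel _ (hf'c n), mul_one, add_neg_cancel]
      exact Ideal.zero_mem _
    · refine Submodule.sum_mem _ ?_
      simp only [Finset.mem_Ico]
      rintro i ⟨h2i, _⟩
      have aux : n + 2 ≤ i * (n + 1) := by trans 2 * (n + 1) <;> nlinarith only [h2i]
      refine Ideal.mul_mem_left _ _ (Ideal.pow_le_pow_right aux ?_)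
      rw [pow_mul']
      exact Ideal.pow_mem_pow ((Ideal.neg_mem_iff _).2 <| Ideal.mul_mem_right _ _ ih) _
  have aux : ∀ m n, m ≤ n → c m ≡ c n [SMOD (I ^ m • ⊤ : Ideal R)] := by
    intro m n hmn
    rw [← Ideal.one_eq_top, Ideal.smul_eq_mul, mul_one]
    obtain ⟨k, rfl⟩ := Nat.exists_eq_add_of_le hmn
    clear hmn
    induction' k with k ih
    · rw [add_zero]
    rw [← add_assoc, hc, ← add_zero (c m), sub_eq_add_neg]
    refine ih.add ?_
    symm
    rw [SModEq.zero, Ideal.neg_mem_iff]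
    refine Ideal.mul_mem_right _ _ (Ideal.pow_le_pow_right ?_ (hfcI _))
    rw [add_assoc]
    exact le_self_add
  obtain ⟨a, ha⟩ := IsPrecomplete.prec' c (aux _ _)
  refine ⟨a, ?_, ?_⟩
  · show f.IsRoot a
    suffices ∀ n, f.eval a ≡ 0 [SMOD (I ^ n • ⊤ : Ideal R)] by exact IsHausdorff.haus' _ this
    intro n
    specialize ha n
    rw [← Ideal.one_eq_top, Ideal.smul_eq_mul, mul_one] at ha ⊢
    refine (ha.symm.eval f).trans ?_
    rw [SModEq.zero]
    exact Ideal.pow_le_pow_right le_self_add (hfcI _)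
  · show a - a₀ ∈ I
    specialize ha (0 + 1)
    rw [hc, pow_one, ← Ideal.one_eq_top, Ideal.smul_eq_mul, mul_one, sub_eq_add_neg] at ha
    rw [← SModEq.sub_mem, ← add_zero a₀]
    refine ha.symm.trans (SModEq.rfl.add ?_)
    rw [SModEq.zero, Ideal.neg_mem_iff]
    exact Ideal.mul_mem_right _ _ h₁



lemma finite_quot_span_pow {O : Type*} [CommRing O] [IsDomain O] [IsDiscreteValuationRing O]
    [Finite (IsLocalRing.ResidueField O)] {ϖ : O} (hϖ : Irreducible ϖ) (k : ℕ) :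
    Finite (O ⧸ (Ideal.span {ϖ ^ k} : Ideal O)) := by
  induction k with
  | zero =>
      have : Subsingleton (O ⧸ (Ideal.span {ϖ ^ 0} : Ideal O)) := by
        rw [pow_zero, Ideal.span_singleton_one]
        exact Ideal.Quotient.subsingleton_iff.mpr rfl
      infer_instance
  | succ k ih =>
      set I := (Ideal.span {ϖ ^ (k + 1)} : Ideal O) with hI
      set J := (Ideal.span {ϖ ^ k} : Ideal O) with hJ
      have hIJ : I ≤ J :=
        Ideal.span_singleton_le_span_singleton.mpr (pow_dvd_pow ϖ (Nat.le_succ k))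
      have h1 : Finite ((O ⧸ I) ⧸ (J.map (Ideal.Quotient.mk I))) :=
        Finite.of_equiv _ (DoubleQuot.quotQuotEquivQuotOfLE hIJ).symm.toEquiv
      have h2 : Finite (J.map (Ideal.Quotient.mk I)) := by
        have hres : Finite (O ⧸ maximalIdeal O) := ‹Finite (ResidueField O)›
        set s : (O ⧸ maximalIdeal O) → O :=
          Function.surjInv Ideal.Quotient.mk_surjective with hsdef
        have hs : ∀ x, Ideal.Quotient.mk (maximalIdeal O) (s x) = x :=
          Function.surjInv_eq _
        set g : (O ⧸ maximalIdeal O) → O ⧸ I :=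
          fun x => Ideal.Quotient.mk I (s x * ϖ ^ k) with hg
        have hsub : ((J.map (Ideal.Quotient.mk I) : Ideal (O ⧸ I)) : Set (O ⧸ I))
            ⊆ Set.range g := by
          intro x hx
          rw [SetLike.mem_coe, hJ, Ideal.map_span, Set.image_singleton,
            Ideal.mem_span_singleton'] at hx
          obtain ⟨c', hc'⟩ := hx
          obtain ⟨c, rfl⟩ := Ideal.Quotient.mk_surjective c'
          refine ⟨Ideal.Quotient.mk _ c, ?_⟩
          have hd' : ϖ ∣ s (Ideal.Quotient.mk (maximalIdeal O) c) - c := by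
            rw [← Ideal.mem_span_singleton, ← hϖ.maximalIdeal_eq, ← Ideal.Quotient.eq]
            exact hs _
          obtain ⟨d, hd⟩ := hd'
          rw [hg]
          dsimp only
          rw [← hc', ← map_mul, Ideal.Quotient.eq]
          have : s (Ideal.Quotient.mk (maximalIdeal O) c) * ϖ ^ k - c * ϖ ^ k
              = d * ϖ ^ (k + 1) := by
            rw [← sub_mul, hd]; ring
          rw [this, hI]
          exact Ideal.mem_span_singleton'.mpr ⟨d, rfl⟩
        exact (Set.Finite.subset (Set.finite_range g) hsub).to_subtype
      exact @Finite.of_addSubgroup_quotient _ _ (J.map (Ideal.Quotient.mk I)).toAddSubgroup h2 h1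





lemma isUnit_one_add_mem {O : Type*} [CommRing O] [IsLocalRing O] {x : O}
    (hx : x ∈ maximalIdeal O) : IsUnit (1 + x) := by
  by_contra hcon
  have h1 : 1 + x ∈ maximalIdeal O := hcon
  have : (1 : O) ∈ maximalIdeal O := by
    simpa using (Ideal.sub_mem _ h1 hx)
  exact (Ideal.ne_top_iff_one _).mp (maximalIdeal.isMaximal O).ne_top this

lemma finiteIndex_of_ncast_ne_zero {O : Type*} [CommRing O] [IsDomain O]
    [IsDiscreteValuationRing O] [IsAdicComplete (maximalIdeal O) O]
    [Finite (IsLocalRing.ResidueField O)] {n : ℕ} (hn : (n : O) ≠ 0) :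
    ((powMonoidHom n : Oˣ →* Oˣ).range).FiniteIndex := by
  obtain ⟨ϖ, hϖ⟩ := IsDiscreteValuationRing.exists_irreducible O
  set J : Ideal O := Ideal.span {(n : O) ^ 2 * ϖ} with hJdef
  have hJ0 : (n : O) ^ 2 * ϖ ≠ 0 := mul_ne_zero (pow_ne_zero _ hn) hϖ.ne_zero
  obtain ⟨k, hassoc⟩ := IsDiscreteValuationRing.associated_pow_irreducible hJ0 hϖ
  haveI hfinJ : Finite (O ⧸ J) := by
    rw [hJdef, Ideal.span_singleton_eq_span_singleton.mpr hassoc]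
    exact finite_quot_span_pow hϖ k
  set φ : Oˣ →* (O ⧸ J)ˣ := Units.map (Ideal.Quotient.mk J : O →+* O ⧸ J).toMonoidHom with hφ
  haveI : φ.ker.FiniteIndex := Subgroup.finiteIndex_ker φ
  refine Subgroup.finiteIndex_of_le (H := φ.ker) ?_
  intro u hu
  -- u ≡ 1 mod J
  have hu1 : ((u : O) - 1) ∈ J := by
    have : Ideal.Quotient.mk J (u : O) = 1 := by
      have := congrArg Units.val hu
      simpa [hφ] using this
    rw [← Ideal.Quotient.eq_zero_iff_mem, map_sub, map_one, this, sub_self]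
  rw [hJdef, Ideal.mem_span_singleton] at hu1
  obtain ⟨s, hs⟩ := hu1
  set t : O := ϖ * s with htdef
  have ht : t ∈ maximalIdeal O := by
    rw [hϖ.maximalIdeal_eq]
    exact Ideal.mem_span_singleton.mpr ⟨s, rfl⟩
  have hut : (u : O) = 1 + (n : O) ^ 2 * t := by
    rw [htdef, ← mul_assoc, ← hs]; ring
  obtain ⟨r, hr⟩ := exists_one_add_pow (C (n : O) * X) n
  set h : O[X] := C (-t) + X + X ^ 2 * r with hhdef
  have heval : ∀ y : O, (1 + (n : O) * y) ^ n
      = 1 + (n : O) * ((n : O) * y) + ((n : O) * y) ^ 2 * r.eval y := by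
    intro y
    have := congrArg (Polynomial.eval y) hr
    simpa using this
  have h₁ : h.eval 0 ∈ maximalIdeal O := by
    have : h.eval 0 = -t := by simp [hhdef]
    rw [this]
    exact neg_mem ht
  have h₂ : IsUnit (Ideal.Quotient.mk (maximalIdeal O) (h.derivative.eval 0)) := by
    have : h.derivative.eval 0 = 1 := by
      simp [hhdef, derivative_mul]
    rw [this, map_one]
    exact isUnit_one
  obtain ⟨y, hy, hym⟩ := hensel_nonmonic (maximalIdeal O) h 0 h₁ h₂
  rw [sub_zero] at hym
  have hy0 : h.eval y = 0 := hy
  have hyt : y + y ^ 2 * r.eval y = t := by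
    have : h.eval y = -t + y + y ^ 2 * r.eval y := by simp [hhdef]
    rw [this] at hy0
    linear_combination hy0
  have hpow : (1 + (n : O) * y) ^ n = (u : O) := by
    rw [heval y, hut, ← hyt]; ring
  have hunit : IsUnit (1 + (n : O) * y) :=
    isUnit_one_add_mem (Ideal.mul_mem_left _ _ hym)
  refine ⟨hunit.unit, ?_⟩
  ext
  simpa [powMonoidHom] using hpow




lemma index_eq_zero_of_charP {O : Type*} [CommRing O] [IsDomain O] [IsDiscreteValuationRing O]
    {p : ℕ} (hp : p.Prime) [CharP O p] {n : ℕ} (hpn : p ∣ n) :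
    ((powMonoidHom n : Oˣ →* Oˣ).range).index = 0 := by
  haveI : Fact p.Prime := ⟨hp⟩
  obtain ⟨m, rfl⟩ := hpn
  obtain ⟨ϖ, hϖ⟩ := IsDiscreteValuationRing.exists_irreducible O
  have hϖm : ∀ a : ℕ, 1 ≤ a → ϖ ^ a ∈ maximalIdeal O := by
    intro a ha
    rw [hϖ.maximalIdeal_eq]
    exact Ideal.mem_span_singleton.mpr (dvd_pow_self ϖ (by omega))
  set K := (powMonoidHom (p * m) : Oˣ →* Oˣ).range with hK
  have core : ∀ a b : ℕ, 1 ≤ a → a < b → ¬ p ∣ a →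
      ∀ z : Oˣ, ¬ ((1 + ϖ ^ a) * (z : O) ^ p = 1 + ϖ ^ b) := by
    intro a b ha hab hpa z heq
    have hfrob : ((z : O)) ^ p = ((z : O) - 1) ^ p + 1 := by
      have h := add_pow_char (R := O) ((z : O) - 1) 1 (p := p)
      simpa using h
    have hb : ϖ ^ b = ϖ ^ a * ϖ ^ (b - a) := by
      rw [← pow_add]; congr 1; omega
    rw [hfrob] at heq
    have hmain : (1 + ϖ ^ a) * ((z : O) - 1) ^ p = ϖ ^ a * (ϖ ^ (b - a) - 1) := by
      linear_combination heq + hb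
    have hub : IsUnit (ϖ ^ (b - a) - 1) := by
      have h1 := (isUnit_one_add_mem (x := -(ϖ ^ (b - a))) (neg_mem (hϖm _ (by omega)))).neg
      have h2 : -(1 + -(ϖ ^ (b - a))) = ϖ ^ (b - a) - 1 := by ring
      rwa [h2] at h1
    have hz1 : (z : O) - 1 ≠ 0 := by
      intro h0
      rw [h0] at hmain
      have h2 : ϖ ^ a * (ϖ ^ (b - a) - 1) = 0 := by rw [← hmain]; simp [zero_pow hp.ne_zero]
      rcases mul_eq_zero.mp h2 with h | h
      · exact pow_ne_zero _ hϖ.ne_zero h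
      · exact hub.ne_zero h
    obtain ⟨v, hv⟩ := IsDiscreteValuationRing.associated_pow_irreducible hz1 hϖ
    obtain ⟨c, hc⟩ := hv
    have hz : (z : O) - 1 = ϖ ^ v * (↑c⁻¹ : O) := by
      have h3 := congrArg (· * (↑c⁻¹ : O)) hc
      simpa [mul_assoc] using h3
    have e1 : ((z : O) - 1) ^ p = ϖ ^ (v * p) * (↑c⁻¹ : O) ^ p := by
      rw [hz, mul_pow, pow_mul]
    set x : Oˣ := (isUnit_one_add_mem (hϖm a ha)).unit with hxdef
    have key : ↑(x * (c⁻¹) ^ p) * ϖ ^ (v * p) = ↑hub.unit * ϖ ^ a := by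
      rw [Units.val_mul, Units.val_pow_eq_pow_val, hxdef, IsUnit.unit_spec, IsUnit.unit_spec]
      linear_combination hmain - (1 + ϖ ^ a) * e1
    have hva := IsDiscreteValuationRing.unit_mul_pow_congr_pow hϖ hϖ _ _ _ _ key
    exact hpa (hva ▸ dvd_mul_left p v)
  have hinj : Function.Injective (fun k : ℕ =>
      (QuotientGroup.mk ((isUnit_one_add_mem (hϖm (1 + p * k) (by omega))).unit) : Oˣ ⧸ K)) := by
    intro k l hkl
    by_contra hne
    wlog hlt : k < l generalizing k l
    · exact this hkl.symm (Ne.symm hne) (by omega)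
    rw [QuotientGroup.eq] at hkl
    obtain ⟨w, hw⟩ := hkl
    have hzp : (isUnit_one_add_mem (hϖm (1 + p * k) (by omega))).unit * (w ^ m) ^ p
        = (isUnit_one_add_mem (hϖm (1 + p * l) (by omega))).unit := by
      rw [← pow_mul, mul_comm m p]
      rw [powMonoidHom_apply] at hw
      rw [hw]
      group
    have hO : (1 + ϖ ^ (1 + p * k)) * ((w ^ m : Oˣ) : O) ^ p = 1 + ϖ ^ (1 + p * l) := by
      have h4 := congrArg (Units.val) hzp
      simpa [Units.val_mul, Units.val_pow_eq_pow_val, IsUnit.unit_spec] using h4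
    refine core (1 + p * k) (1 + p * l) (by omega) (by have := hp.two_le; nlinarith) ?_ (w ^ m) hO
    intro hd
    have h5 : p ∣ 1 := by
      have := Nat.dvd_sub hd (dvd_mul_right p k)
      simpa using this
    exact hp.one_lt.ne' (Nat.dvd_one.mp h5)
  have : Infinite (Oˣ ⧸ K) := Infinite.of_injective _ hinj
  rw [Subgroup.index_eq_card]
  exact Nat.card_eq_zero_of_infinite


/-- Let `O` be a complete discrete valuation ring with finite residue field and `F` its
fraction field.  The subgroup of `n`-th powers `O^{×n}` has finite index in `O^×` if and
only if the characteristic of `F` does not divide `n`. -/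
theorem finiteIndex_powers_iff_char_not_dvd (O : Type*) [CommRing O] [IsDomain O]
    [IsDiscreteValuationRing O]
    [IsAdicComplete (IsLocalRing.maximalIdeal O) O]
    [Finite (IsLocalRing.ResidueField O)]
    (n : ℕ) (hn : 1 ≤ n) :
    (powMonoidHom n : Oˣ →* Oˣ).range.index ≠ 0 ↔
      ¬ (ringChar (FractionRing O) ∣ n) := by
  have hinj : Function.Injective (algebraMap O (FractionRing O)) :=
    IsFractionRing.injective O (FractionRing O)
  set p := ringChar (FractionRing O) with hp
  haveI : CharP (FractionRing O) p := ringChar.charP _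
  have hchar : p ∣ n ↔ (n : O) = 0 := by
    rw [← CharP.cast_eq_zero_iff (FractionRing O) p n,
      show ((n : FractionRing O)) = algebraMap O (FractionRing O) (n : O) from
        (map_natCast _ n).symm, map_eq_zero_iff _ hinj]
  constructor
  · intro hidx hd
    have hd' := hd
    rw [hchar] at hd'
    haveI : CharP O p := (algebraMap O (FractionRing O)).charP hinj p
    rcases CharP.char_is_prime_or_zero (FractionRing O) p with hprime | h0
    · exact hidx (index_eq_zero_of_charP hprime hd)
    · rw [h0] at hd
      omega
  · intro hnd
    have hn0 : (n : O) ≠ 0 := fun h => hnd (hchar.mpr h)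
    exact (finiteIndex_of_ncast_ne_zero hn0).index_ne_zero
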